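/- Let k/k₀ be a finite Galois extension with Γ = Gal(k/k₀), and suppose Γ acts on Λ by lattice automorphisms such that for every σ ∈ Γ, if σ(ζ) = ζ^n then σ ∘ w ∘ σ⁻¹ = w^n as automorphisms of Λ. Then for all σ ∈ Γ and α, β ∈ Λ: σ(⟨α,β⟩_w) = ⟨σ(α), σ(β)⟩_w and σ(ε_w(α,β)) = ε_w(σ(α), σ(β)). -/

import Mathlib

noncomputable section

/-- The subgroup `(1-w)Λ`. -/
def coinvSub {Λ : Type*} [AddCommGroup Λ] (w : AddAut Λ) : AddSubgroup Λ :=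
  AddSubgroup.closure {y | ∃ x : Λ, y = x - w x}

/-- The pairing `ε_w(α,β) = ∏_{j=1}^{d-1} (1 - ζ^{-j})^{(w^jα,β)}`. -/
def epsw {k : Type*} [Field k] {Λ : Type*} [AddCommGroup Λ] (d : ℕ) (ζ : k)
    (B : Λ →+ Λ →+ ℤ) (w : AddAut Λ) (α β : Λ) : k :=
  ∏ j ∈ Finset.Ico 1 d, (1 - ζ ^ (-(j : ℤ))) ^ (B ((j • w) α) β)

/-- **Lemma 2.13.** Let `k/k₀` be a finite Galois extension with `Γ = Gal(k/k₀)` acting on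
`Λ` by lattice automorphisms such that `σ ∘ w ∘ σ⁻¹ = w^n` whenever `σ(ζ) = ζ^n`.  Then
`σ(⟨α,β⟩_w) = ⟨σα, σβ⟩_w` and `σ(ε_w(α,β)) = ε_w(σα, σβ)`, where
`⟨α,β⟩_w = ζ^{∑_{j=1}^{d-1} j·(w^jα,β)}`. -/
theorem galois_equivariance_of_pairing_and_epsw
    (k : Type*) [Field k] [CharZero k]
    (k₀ : Type*) [Field k₀] [Algebra k₀ k] [FiniteDimensional k₀ k] [IsGalois k₀ k]
    (d : ℕ) (hd : 0 < d) (ζ : k) (hζ : IsPrimitiveRoot ζ d)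
    (Λ : Type*) [AddCommGroup Λ] [Module.Free ℤ Λ] [Module.Finite ℤ Λ]
    (B : Λ →+ Λ →+ ℤ)
    (hBsymm : ∀ a b : Λ, B a b = B b a)
    (hBpos : ∀ a : Λ, a ≠ 0 → 0 < B a a)
    (hBgen : AddSubgroup.closure {a : Λ | B a a = 2} = ⊤)
    (w : AddAut Λ) (hwB : ∀ a b : Λ, B (w a) (w b) = B a b)
    (hword : addOrderOf w = d)
    (hell : Finite (Λ ⧸ coinvSub w)) :
    ∀ (σ : k ≃ₐ[k₀] k) (S : AddAut Λ) (n : ℕ),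
      (∀ a b : Λ, B (S a) (S b) = B a b) →
      σ ζ = ζ ^ n →
      (∀ x : Λ, S (w ((-S) x)) = (n • w) x) →
      ∀ α β : Λ,
        σ (ζ ^ (∑ j ∈ Finset.Ico 1 d, (j : ℤ) * B ((j • w) α) β)) =
          ζ ^ (∑ j ∈ Finset.Ico 1 d, (j : ℤ) * B ((j • w) (S α)) (S β)) ∧
        σ (epsw d ζ B w α β) = epsw d ζ B w (S α) (S β) := by
  intro σ S n hSB hσζ hSw α β
  have hζ0 : ζ ≠ 0 := hζ.ne_zero hd.ne'
  -- periodicity of powers of ζ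
  have hper : ∀ a b : ℤ, (d : ℤ) ∣ a - b → ζ ^ a = ζ ^ b := by
    rintro a b ⟨c, hc⟩
    have ha : a = b + (d : ℤ) * c := by omega
    rw [ha, zpow_add₀ hζ0, zpow_mul, zpow_natCast, hζ.pow_eq_one, one_zpow, mul_one]
  -- coprimality of n and d
  have hprim : IsPrimitiveRoot (ζ ^ n) d := by
    rw [← hσζ]; exact hζ.map_of_injective σ.injective
  have hcop : Nat.Coprime n d := (hζ.pow_iff_coprime hd n).mp hprim
  -- an inverse of n mod d
  obtain ⟨m, hm⟩ : ∃ m, n * m % d = 1 % d := by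
    rcases eq_or_lt_of_le (Nat.succ_le_of_lt hd) with h1 | h1
    · exact ⟨0, by rw [← h1]; simp⟩
    · obtain ⟨m', -, hm'⟩ := Nat.exists_mul_mod_eq_one_of_coprime hcop h1
      exact ⟨m', by rw [hm', Nat.one_mod_eq_one.mpr h1.ne']⟩
  have hm' : ∀ a : ℕ, (n * (m * a)) % d = a % d := by
    intro a
    conv_rhs => rw [← Nat.one_mul a]
    rw [← Nat.mul_assoc]
    exact Nat.ModEq.mul_right a hm
  have hcop' : Nat.Coprime m d := by
    have h1 : Nat.gcd m d ∣ n * m := Dvd.dvd.mul_left (Nat.gcd_dvd_left m d) n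
    have h2 : Nat.gcd m d ∣ 1 := by
      rw [← Nat.dvd_mod_iff (Nat.gcd_dvd_right m d), ← hm]
      exact (Nat.dvd_mod_iff (Nat.gcd_dvd_right m d)).mpr h1
    exact Nat.dvd_one.mp h2
  -- membership for the reindexing maps
  have hmem : ∀ a : ℕ, Nat.Coprime a d → ∀ j ∈ Finset.Ico 1 d,
      a * j % d ∈ Finset.Ico 1 d := by
    intro a ha j hj
    simp only [Finset.mem_Ico] at hj ⊢
    refine ⟨?_, Nat.mod_lt _ hd⟩
    rcases Nat.eq_zero_or_pos (a * j % d) with h0 | h0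
    · exfalso
      have hdvd : d ∣ a * j := Nat.dvd_of_mod_eq_zero h0
      have hdj : d ∣ j := (Nat.Coprime.dvd_of_dvd_mul_left ha.symm hdvd)
      have := Nat.le_of_dvd (by omega) hdj
      omega
    · omega
  -- the left/right inverse properties
  have hli : ∀ j ∈ Finset.Ico 1 d, m * (n * j % d) % d = j := by
    intro j hj
    simp only [Finset.mem_Ico] at hj
    have h1 : m * (n * j % d) ≡ m * (n * j) [MOD d] :=
      (Nat.mod_modEq (n * j) d).mul_left m
    have h2 : (m * (n * j)) % d = j % d := by
      have : m * (n * j) = n * (m * j) := by ring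
      rw [this]; exact hm' j
    calc m * (n * j % d) % d = (m * (n * j)) % d := h1
      _ = j % d := h2
      _ = j := Nat.mod_eq_of_lt hj.2
  have hri : ∀ j ∈ Finset.Ico 1 d, n * (m * j % d) % d = j := by
    intro j hj
    simp only [Finset.mem_Ico] at hj
    have h1 : n * (m * j % d) ≡ n * (m * j) [MOD d] :=
      (Nat.mod_modEq (m * j) d).mul_left n
    calc n * (m * j % d) % d = (n * (m * j)) % d := h1
      _ = j % d := hm' j
      _ = j := Nat.mod_eq_of_lt hj.2
  -- conjugation relation for powers of w
  have h1 : (S + w + -S : AddAut Λ) = n • w := by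
    ext y
    simpa [AddAut.add_apply] using hSw y
  have hSwj : ∀ (j : ℕ) (x : Λ), ((n * j) • w) x = S ((j • w) ((-S) x)) := by
    intro j x
    have h2 : (S + j • w + -S : AddAut Λ) = (n * j) • w := by
      calc S + j • w + -S = AddAut.conj S (j • w) := (AddAut.conj_apply S (j • w)).symm
        _ = j • (AddAut.conj S w) := map_nsmul _ _ _
        _ = j • (S + w + -S) := rfl
        _ = j • (n • w) := by rw [h1]
        _ = (n * j) • w := by rw [smul_smul, mul_comm]
    rw [← h2]
    simp [AddAut.add_apply]
  -- the key identity
  have hkey : ∀ j : ℕ, B (((n * j % d) • w) (S α)) (S β) = B ((j • w) α) β := by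
    intro j
    have hpow : ((n * j % d) • w) (S α) = S ((j • w) α) := by
      calc ((n * j % d) • w) (S α) = ((n * j) • w) (S α) := by
            rw [← hword, mod_addOrderOf_nsmul]
        _ = S ((j • w) ((-S) (S α))) := hSwj j (S α)
        _ = S ((j • w) α) := by simp
    rw [hpow, hSB]
  -- divisibility helper
  have hdvd1 : ∀ j : ℕ, (d : ℤ) ∣ ((n * j : ℕ) : ℤ) - ((n * j % d : ℕ) : ℤ) := by
    intro j
    refine ⟨((n * j / d : ℕ) : ℤ), ?_⟩
    have h0 := Nat.div_add_mod (n * j) d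
    omega
  constructor
  · -- the pairing
    have hsum : ∑ j ∈ Finset.Ico 1 d, (j : ℤ) * B ((j • w) (S α)) (S β)
        = ∑ j ∈ Finset.Ico 1 d, ((n * j % d : ℕ) : ℤ) * B ((j • w) α) β := by
      refine (Finset.sum_nbij' (fun j => n * j % d) (fun j => m * j % d)
        (hmem n hcop) (hmem m hcop') hli hri ?_).symm
      intro a ha
      rw [hkey a]
    rw [map_zpow₀, hσζ, ← zpow_natCast ζ n, ← zpow_mul, hsum]
    refine hper _ _ ?_
    rw [Finset.mul_sum, ← Finset.sum_sub_distrib]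
    refine Finset.dvd_sum ?_
    intro j hj
    have heq : (n : ℤ) * ((j : ℤ) * B ((j • w) α) β) - ((n * j % d : ℕ) : ℤ) * B ((j • w) α) β
        = (((n * j : ℕ) : ℤ) - ((n * j % d : ℕ) : ℤ)) * B ((j • w) α) β := by
      push_cast; ring
    rw [heq]
    exact Dvd.dvd.mul_right (hdvd1 j) _
  · -- epsilon
    unfold epsw
    have hprod : ∏ j ∈ Finset.Ico 1 d, (1 - ζ ^ (-(j : ℤ))) ^ (B ((j • w) (S α)) (S β))
        = ∏ j ∈ Finset.Ico 1 d, (1 - ζ ^ (-((n * j % d : ℕ) : ℤ))) ^ (B ((j • w) α) β) := by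
      refine (Finset.prod_nbij' (fun j => n * j % d) (fun j => m * j % d)
        (hmem n hcop) (hmem m hcop') hli hri ?_).symm
      intro a ha
      rw [hkey a]
    rw [map_prod, hprod]
    refine Finset.prod_congr rfl ?_
    intro j hj
    rw [map_zpow₀, map_sub, map_one, map_zpow₀, hσζ, ← zpow_natCast ζ n, ← zpow_mul]
    congr 2
    refine hper _ _ ?_
    have h2 : (n : ℤ) * (-(j : ℤ)) - (-(((n * j % d : ℕ)) : ℤ))
        = -(((n * j : ℕ) : ℤ) - ((n * j % d : ℕ) : ℤ)) := by push_cast; ring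
    rw [h2]
    exact dvd_neg.mpr (hdvd1 j)
  -- done

end
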